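/- arXiv:1002.3722 — 5 statements merged into one kernel-verified Lean document; each statement's English description precedes it below -/
import Mathlib

section
/- For every ν > 0 there exists C > 0 such that for all ε ∈ (0,1] and k ∈ ℤ, k ≠ 0: ∫₀^∞ e^{-2νk²t}(1 - e^{-ε²k⁴t})² dt ≤ C · min(k⁻², ε⁴k²). -/
open MeasureTheory Real Set

lemma exp_decay_integral_Ioi {r : ℝ} (hr : 0 < r) :
    ∫ t in Ioi (0:ℝ), Real.exp (-(r * t)) = 1 / r := by
  have h := Real.integral_rpow_mul_exp_neg_mul_Ioi (a := 1) (r := r) one_pos hr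
  simpa [Real.rpow_one, Real.Gamma_one] using h

lemma sq_exp_decay_integral_Ioi {r : ℝ} (hr : 0 < r) :
    ∫ t in Ioi (0:ℝ), t ^ 2 * Real.exp (-(r * t)) = 2 / r ^ 3 := by
  have h := Real.integral_rpow_mul_exp_neg_mul_Ioi (a := 3) (r := r) (by norm_num) hr
  have hG : Real.Gamma 3 = 2 := by
    rw [show (3:ℝ) = (2:ℕ) + 1 by norm_num, Real.Gamma_nat_eq_factorial]
    norm_num
  rw [hG] at h
  have h2 : ∫ t in Ioi (0:ℝ), t ^ 2 * Real.exp (-(r * t))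
      = ∫ t in Ioi (0:ℝ), t ^ ((3:ℝ) - 1) * Real.exp (-(r * t)) := by
    refine setIntegral_congr_fun measurableSet_Ioi (fun t ht => ?_)
    rw [show (3:ℝ) - 1 = ((2:ℕ):ℝ) by norm_num, Real.rpow_natCast]
  rw [h2, h, show (3:ℝ) = ((3:ℕ):ℝ) by norm_num, Real.rpow_natCast, div_pow, one_pow]
  ring

theorem stmt_5 (ν : ℝ) (hν : 0 < ν) :
    ∃ C > 0, ∀ (ε : ℝ), ε ∈ Set.Ioc (0 : ℝ) 1 → ∀ (k : ℤ), k ≠ 0 →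
      ∫ t in Set.Ioi (0 : ℝ),
          Real.exp (-2 * ν * (k : ℝ) ^ 2 * t) *
            (1 - Real.exp (-ε ^ 2 * (k : ℝ) ^ 4 * t)) ^ 2
        ≤ C * min (((k : ℝ) ^ 2)⁻¹) (ε ^ 4 * (k : ℝ) ^ 2) := by
  refine ⟨max (1/(2*ν)) (1/(4*ν^3)), lt_max_of_lt_left (by positivity), ?_⟩
  intro ε hε k hk
  set C := max (1/(2*ν)) (1/(4*ν^3)) with hC
  have hCpos : 0 < C := lt_max_of_lt_left (by positivity)
  have hkR : ((k:ℝ)) ≠ 0 := Int.cast_ne_zero.mpr hk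
  have hk2 : (0:ℝ) < (k:ℝ)^2 := by positivity
  set r := 2 * ν * (k:ℝ)^2 with hrdef
  have hrpos : 0 < r := by positivity
  set c := ε^2 * (k:ℝ)^4 with hcdef
  have hεpos : 0 < ε := hε.1
  have hcpos : 0 < c := by positivity
  set f := fun t : ℝ => Real.exp (-2 * ν * (k : ℝ) ^ 2 * t) *
      (1 - Real.exp (-ε ^ 2 * (k : ℝ) ^ 4 * t)) ^ 2 with hf
  have hfnn : 0 ≤ᶠ[ae (volume.restrict (Ioi (0:ℝ)))] f := by
    filter_upwards with t
    positivity
  have hbase : ∀ t ∈ Ioi (0:ℝ), 0 ≤ 1 - Real.exp (-ε ^ 2 * (k : ℝ) ^ 4 * t) ∧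
      1 - Real.exp (-ε ^ 2 * (k : ℝ) ^ 4 * t) ≤ c * t := by
    intro t ht
    simp only [mem_Ioi] at ht
    have h1 : Real.exp (-ε ^ 2 * (k : ℝ) ^ 4 * t) ≤ 1 := by
      apply Real.exp_le_one_iff.mpr
      nlinarith
    have h2 := Real.add_one_le_exp (-ε ^ 2 * (k : ℝ) ^ 4 * t)
    constructor
    · linarith
    · simp only [hcdef]; nlinarith
  -- Bound 1
  have hI1 : ∫ t in Ioi (0:ℝ), f t ≤ 1 / r := by
    rw [← exp_decay_integral_Ioi hrpos]
    refine integral_mono_of_nonneg hfnn ((exp_neg_integrableOn_Ioi 0 hrpos).congr_fun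
      (fun t _ => by beta_reduce; rw [neg_mul]) measurableSet_Ioi) ?_
    filter_upwards [ae_restrict_mem measurableSet_Ioi] with t ht
    obtain ⟨ha, _⟩ := hbase t ht
    have h1 : Real.exp (-ε ^ 2 * (k : ℝ) ^ 4 * t) ≤ 1 := by linarith
    have he : Real.exp (-2 * ν * (k : ℝ) ^ 2 * t) = Real.exp (-(r * t)) := by
      rw [hrdef]; ring_nf
    have hsq : (1 - Real.exp (-ε ^ 2 * (k : ℝ) ^ 4 * t)) ^ 2 ≤ 1 := by nlinarith [Real.exp_pos (-ε ^ 2 * (k : ℝ) ^ 4 * t)]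
    simp only [hf]
    rw [he]
    nlinarith [Real.exp_pos (-(r*t)), mul_le_mul_of_nonneg_left hsq (Real.exp_pos (-(r*t))).le]
  -- Bound 2
  have hint2 : IntegrableOn (fun t : ℝ => c^2 * (t ^ 2 * Real.exp (-(r * t)))) (Ioi 0) := by
    have h0 := integrableOn_rpow_mul_exp_neg_mul_rpow (p := 1) (s := 2) (b := r)
      (by norm_num) one_pos hrpos
    have h1 : IntegrableOn (fun t : ℝ => t ^ 2 * Real.exp (-(r * t))) (Ioi 0) :=
      h0.congr_fun (fun t ht => by
        beta_reduce; rw [Real.rpow_one, show (2:ℝ) = ((2:ℕ):ℝ) by norm_num, Real.rpow_natCast, neg_mul])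
        measurableSet_Ioi
    exact h1.const_mul _
  have hI2 : ∫ t in Ioi (0:ℝ), f t ≤ c^2 * (2 / r^3) := by
    have hval : ∫ t in Ioi (0:ℝ), c^2 * (t ^ 2 * Real.exp (-(r * t))) = c^2 * (2 / r^3) := by
      rw [integral_const_mul, sq_exp_decay_integral_Ioi hrpos]
    rw [← hval]
    refine integral_mono_of_nonneg hfnn hint2 ?_
    filter_upwards [ae_restrict_mem measurableSet_Ioi] with t ht
    obtain ⟨ha, hb⟩ := hbase t ht
    have he : Real.exp (-2 * ν * (k : ℝ) ^ 2 * t) = Real.exp (-(r * t)) := by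
      rw [hrdef]; ring_nf
    have hsq : (1 - Real.exp (-ε ^ 2 * (k : ℝ) ^ 4 * t)) ^ 2 ≤ (c * t) ^ 2 :=
      pow_le_pow_left₀ ha hb 2
    simp only [hf]
    rw [he]
    nlinarith [mul_le_mul_of_nonneg_left hsq (Real.exp_pos (-(r*t))).le]
  -- combine
  rw [mul_min_of_nonneg _ _ hCpos.le]
  refine le_min (hI1.trans ?_) (hI2.trans ?_)
  · have : 1 / r = (1/(2*ν)) * ((k:ℝ)^2)⁻¹ := by
      rw [hrdef]; field_simp
    rw [this]
    exact mul_le_mul_of_nonneg_right (le_max_left _ _) (by positivity)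
  · have : c^2 * (2 / r^3) = (1/(4*ν^3)) * (ε^4 * (k:ℝ)^2) := by
      rw [hrdef, hcdef]; field_simp; ring
    rw [this]
    exact mul_le_mul_of_nonneg_right (le_max_right _ _) (by positivity)
end

section
/- For ν > 0 define σ_k = k²/(1 + νk² + ε²k⁴) and σ̂_k = 1/(ν + ε²k²) for k ∈ ℤ and ε ∈ (0,1]. Then there exists C > 0 (depending only on ν) such that |σ_k − σ̂_k| ≤ C/(1 + k²) for all k ∈ ℤ and all ε ∈ (0,1]. -/
theorem stmt_6 (ν : ℝ) (hν : 0 < ν) :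
    ∃ C > 0, ∀ (ε : ℝ), ε ∈ Set.Ioc (0 : ℝ) 1 → ∀ (k : ℤ),
      |(k : ℝ) ^ 2 / (1 + ν * (k : ℝ) ^ 2 + ε ^ 2 * (k : ℝ) ^ 4)
          - 1 / (ν + ε ^ 2 * (k : ℝ) ^ 2)|
        ≤ C / (1 + (k : ℝ) ^ 2) := by
  have hm : 0 < min 1 ν := lt_min one_pos hν
  refine ⟨1 / (ν * min 1 ν), by positivity, ?_⟩
  rintro ε ⟨hε0, hε1⟩ k
  have ha : 0 < 1 + ν * (k : ℝ) ^ 2 + ε ^ 2 * (k : ℝ) ^ 4 := by positivity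
  have hb : 0 < ν + ε ^ 2 * (k : ℝ) ^ 2 := by positivity
  have key : (k : ℝ) ^ 2 / (1 + ν * (k : ℝ) ^ 2 + ε ^ 2 * (k : ℝ) ^ 4)
      - 1 / (ν + ε ^ 2 * (k : ℝ) ^ 2)
      = -(1 / ((1 + ν * (k : ℝ) ^ 2 + ε ^ 2 * (k : ℝ) ^ 4)
          * (ν + ε ^ 2 * (k : ℝ) ^ 2))) := by
    field_simp
    ring
  rw [key, abs_neg, abs_of_nonneg (by positivity)]
  rw [div_le_div_iff₀ (by positivity) (by positivity)]
  have h1 : min 1 ν ≤ 1 := min_le_left _ _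
  have h2 : min 1 ν ≤ ν := min_le_right _ _
  have hk : (0:ℝ) ≤ (k : ℝ) ^ 2 := sq_nonneg _
  have hk4 : (0:ℝ) ≤ ε ^ 2 * (k : ℝ) ^ 4 := by positivity
  have hk2 : (0:ℝ) ≤ ε ^ 2 * (k : ℝ) ^ 2 := by positivity
  rw [one_mul, div_mul_eq_mul_div, le_div_iff₀ (by positivity)]
  nlinarith [mul_le_mul_of_nonneg_right h2 hk, mul_nonneg hk4 hk2,
    mul_nonneg (mul_nonneg hν.le hk) hk2, mul_nonneg hk4 hb.le]
end

section
/- Let ν > 0 and for ε ∈ (0,1] set σ̂_k = 1/(ν + ε²k²). Then there exists C > 0 such that |π/√ν − Σ_{k∈ℤ} ε·σ̂_k| ≤ C·ε for all ε ∈ (0,1]. -/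
open Real intervalIntegral Finset Filter Topology

private lemma arctan_le_self' {x : ℝ} (hx : 0 ≤ x) : Real.arctan x ≤ x := by
  rcases eq_or_lt_of_le hx with h | h
  · simp [← h]
  · have h1 : 0 < Real.arctan x := by
      have := Real.arctan_strictMono h
      simpa [Real.arctan_zero] using this
    have := Real.lt_tan h1 (Real.arctan_lt_pi_div_two x)
    rw [Real.tan_arctan] at this
    exact this.le

theorem stmt_7 (ν : ℝ) (hν : 0 < ν) :
    ∃ C > 0, ∀ (ε : ℝ), ε ∈ Set.Ioc (0 : ℝ) 1 →
      |Real.pi / Real.sqrt ν - ∑' k : ℤ, ε * (ν + ε ^ 2 * (k : ℝ) ^ 2)⁻¹|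
        ≤ C * ε := by
  set s := Real.sqrt ν with hs_def
  have hs : 0 < s := Real.sqrt_pos.mpr hν
  have hs2 : s ^ 2 = ν := Real.sq_sqrt hν.le
  set f : ℝ → ℝ := fun x => (ν + x ^ 2)⁻¹ with hf_def
  have hden : ∀ x : ℝ, 0 < ν + x ^ 2 := fun x => by positivity
  have hf_pos : ∀ x, 0 < f x := fun x => inv_pos.mpr (hden x)
  have hcont : Continuous f :=
    (continuous_const.add (continuous_pow 2)).inv₀ (fun x => (hden x).ne')
  have hint : ∀ a b : ℝ, IntervalIntegrable f MeasureTheory.volume a b :=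
    fun a b => hcont.intervalIntegrable a b
  have hanti : ∀ a x : ℝ, 0 ≤ a → a ≤ x → f x ≤ f a := by
    intro a x ha hax
    apply inv_anti₀ (hden a)
    have : a ^ 2 ≤ x ^ 2 := pow_le_pow_left₀ ha hax 2
    linarith
  -- closed form of the integral
  have hform : ∀ a b : ℝ, (∫ x in a..b, f x)
      = (Real.arctan (b / s) - Real.arctan (a / s)) / s := by
    intro a b
    have h1 : ∀ x : ℝ, f x = ν⁻¹ * ((1 : ℝ) + (x / s) ^ 2)⁻¹ := by
      intro x
      rw [div_pow, hs2]
      rw [hf_def]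
      rw [← mul_inv]
      congr 1
      field_simp
    calc (∫ x in a..b, f x) = ∫ x in a..b, ν⁻¹ * ((1:ℝ) + (x / s) ^ 2)⁻¹ := by
          simp_rw [h1]
      _ = ν⁻¹ * ∫ x in a..b, ((1:ℝ) + (x / s) ^ 2)⁻¹ := intervalIntegral.integral_const_mul _ _
      _ = ν⁻¹ * (s • ∫ y in (a/s)..(b/s), ((1:ℝ) + y ^ 2)⁻¹) := by
          rw [intervalIntegral.integral_comp_div (fun y => ((1:ℝ) + y ^ 2)⁻¹) hs.ne']
      _ = (Real.arctan (b / s) - Real.arctan (a / s)) / s := by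
          rw [smul_eq_mul]
          have : (∫ y in (a/s)..(b/s), ((1:ℝ) + y ^ 2)⁻¹)
              = Real.arctan (b / s) - Real.arctan (a / s) := by
            simpa using integral_inv_one_add_sq (a := a / s) (b := b / s)
          rw [this, ← hs2]
          field_simp
  -- per-interval bounds
  have hstep_le : ∀ a b : ℝ, 0 ≤ a → a ≤ b → (b - a) * f b ≤ ∫ x in a..b, f x := by
    intro a b ha hab
    have : (∫ x in a..b, f b) ≤ ∫ x in a..b, f x := by
      apply intervalIntegral.integral_mono_on hab (by simp [_root_.intervalIntegrable_const]) (hint a b)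
      intro x hx
      exact hanti x b (le_trans ha hx.1) hx.2
    simpa [intervalIntegral.integral_const, smul_eq_mul] using this
  have hstep_ge : ∀ a b : ℝ, 0 ≤ a → a ≤ b → (∫ x in a..b, f x) ≤ (b - a) * f a := by
    intro a b ha hab
    have : (∫ x in a..b, f x) ≤ ∫ x in a..b, f a := by
      apply intervalIntegral.integral_mono_on hab (hint a b) (by simp [_root_.intervalIntegrable_const])
      intro x hx
      exact hanti a x ha hx.1
    simpa [intervalIntegral.integral_const, smul_eq_mul] using this
  refine ⟨ν⁻¹, inv_pos.mpr hν, ?_⟩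
  rintro ε ⟨hε, hε1⟩
  set h : ℕ → ℝ := fun n => ε * (ν + ε ^ 2 * (n : ℝ) ^ 2)⁻¹ with hh_def
  have hhf : ∀ n : ℕ, h n = ε * f (ε * n) := by
    intro n
    simp only [hh_def, hf_def]
    ring_nf
  have hh_pos : ∀ n, 0 < h n := by
    intro n; rw [hhf]; exact mul_pos hε (hf_pos _)
  -- upper bound on partial sums of (h (n+1))
  have hupper : ∀ N : ℕ, ∑ n ∈ Finset.range N, h (n + 1) ≤ π / 2 / s := by
    intro N
    have htel : ∑ n ∈ Finset.range N, ∫ x in (ε * n)..(ε * (n + 1)), f x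
        = ∫ x in (0:ℝ)..(ε * N), f x := by
      have := intervalIntegral.sum_integral_adjacent_intervals
        (a := fun i : ℕ => ε * i) (n := N) (f := f) (fun k _ => hint _ _)
      simpa using this
    have hterm : ∀ n ∈ Finset.range N, h (n + 1) ≤ ∫ x in (ε * n)..(ε * (n + 1)), f x := by
      intro n _
      have h1 : (0:ℝ) ≤ ε * n := by positivity
      have h2 : ε * n ≤ ε * (n + 1) := by nlinarith [hε.le]
      have := hstep_le (ε * n) (ε * (n + 1)) h1 h2
      have heq : (ε * (↑n + 1) - ε * ↑n) = ε := by ring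
      rw [heq] at this
      calc h (n + 1) = ε * f (ε * (n + 1)) := by rw [hhf]; push_cast; ring_nf
        _ ≤ _ := this
    calc ∑ n ∈ Finset.range N, h (n + 1)
        ≤ ∑ n ∈ Finset.range N, ∫ x in (ε * n)..(ε * (n + 1)), f x :=
          Finset.sum_le_sum hterm
      _ = ∫ x in (0:ℝ)..(ε * N), f x := htel
      _ = (Real.arctan (ε * N / s) - Real.arctan (0 / s)) / s := hform _ _
      _ ≤ π / 2 / s := by
          rw [zero_div, Real.arctan_zero, sub_zero]
          gcongr
          exact (Real.arctan_lt_pi_div_two _).le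
  have hsum1 : Summable (fun n : ℕ => h (n + 1)) :=
    summable_of_sum_range_le (fun n => (hh_pos _).le) hupper
  set T : ℝ := ∑' n : ℕ, h (n + 1) with hT_def
  have hT_le : T ≤ π / 2 / s :=
    Real.tsum_le_of_sum_range_le (fun n => (hh_pos _).le) hupper
  -- lower bound for T
  have hT_ge : (π / 2 - Real.arctan (ε / s)) / s ≤ T := by
    have hL : ∀ N : ℕ, (Real.arctan (ε * (N + 1) / s) - Real.arctan (ε / s)) / s ≤ T := by
      intro N
      have htel : ∑ n ∈ Finset.range N, ∫ x in (ε * (n + 1))..(ε * (n + 2)), f x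
          = ∫ x in (ε * 1)..(ε * (N + 1)), f x := by
        have := intervalIntegral.sum_integral_adjacent_intervals
          (a := fun i : ℕ => ε * (i + 1)) (n := N) (f := f) (fun k _ => hint _ _)
        push_cast at this ⊢
        convert this using 3 <;> push_cast <;> ring
      have hterm : ∀ n ∈ Finset.range N,
          (∫ x in (ε * (n + 1))..(ε * (n + 2)), f x) ≤ h (n + 1) := by
        intro n _
        have h1 : (0:ℝ) ≤ ε * (n + 1) := by positivity
        have h2 : ε * (n + 1) ≤ ε * (n + 2) := by nlinarith [hε.le]
        have := hstep_ge (ε * (n + 1)) (ε * (n + 2)) h1 h2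
        have heq : (ε * (↑n + 2) - ε * (↑n + 1)) = ε := by ring
        rw [heq] at this
        calc (∫ x in (ε * (n + 1))..(ε * (n + 2)), f x) ≤ ε * f (ε * (n + 1)) := this
          _ = h (n + 1) := by rw [hhf]; push_cast; ring_nf
      have hsumle : ∑ n ∈ Finset.range N, h (n + 1) ≤ T :=
        Summable.sum_le_tsum (Finset.range N) (fun n _ => (hh_pos _).le) hsum1
      calc (Real.arctan (ε * (N + 1) / s) - Real.arctan (ε / s)) / s
          = ∫ x in (ε * 1)..(ε * (N + 1)), f x := by
            rw [hform]; congr 2; rw [mul_one]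
        _ = ∑ n ∈ Finset.range N, ∫ x in (ε * (n + 1))..(ε * (n + 2)), f x := htel.symm
        _ ≤ ∑ n ∈ Finset.range N, h (n + 1) := Finset.sum_le_sum hterm
        _ ≤ T := hsumle
    have htend : Tendsto (fun N : ℕ => (Real.arctan (ε * (N + 1) / s) - Real.arctan (ε / s)) / s)
        atTop (𝓝 ((π / 2 - Real.arctan (ε / s)) / s)) := by
      have h1 : Tendsto (fun N : ℕ => ε * (N + 1) / s) atTop atTop := by
        apply Tendsto.atTop_div_const hs
        apply Tendsto.const_mul_atTop hε
        exact tendsto_atTop_add_const_right _ _ tendsto_natCast_atTop_atTop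
      have h2 : Tendsto (fun N : ℕ => Real.arctan (ε * (N + 1) / s)) atTop (𝓝 (π / 2)) :=
        (Real.tendsto_arctan_atTop.mono_right nhdsWithin_le_nhds).comp h1
      exact (h2.sub tendsto_const_nhds).div_const s
    exact le_of_tendsto htend (Filter.Eventually.of_forall hL)
  -- decompose the tsum over ℤ
  have hnat : Summable (fun n : ℕ => h n) := (summable_nat_add_iff 1).mp hsum1
  set g : ℤ → ℝ := fun k => ε * (ν + ε ^ 2 * (k : ℝ) ^ 2)⁻¹ with hg_def
  have hg_nat : (fun n : ℕ => g n) = h := by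
    funext n; simp [hg_def, hh_def]
  have hg_neg : (fun n : ℕ => g (-(n + 1))) = fun n => h (n + 1) := by
    funext n; simp only [hg_def, hh_def]; congr 3; push_cast; ring
  have hS : ∑' k : ℤ, g k = h 0 + 2 * T := by
    rw [tsum_of_nat_of_neg_add_one (hg_nat ▸ hnat) (hg_neg ▸ hsum1)]
    rw [show (fun n : ℕ => g n) = h from hg_nat,
      show (fun n : ℕ => g (-(n+1))) = fun n => h (n+1) from hg_neg]
    rw [Summable.tsum_eq_zero_add hnat]
    rw [hT_def]
    ring
  have hh0 : h 0 = ε / ν := by simp [hh_def, div_eq_mul_inv]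
  have harc1 : Real.arctan (ε / s) ≤ ε / s := arctan_le_self' (by positivity)
  have hνs : ν = s * s := by rw [← hs2]; ring
  rw [show (∑' k : ℤ, ε * (ν + ε ^ 2 * (k : ℝ) ^ 2)⁻¹) = ∑' k : ℤ, g k from rfl, hS, hh0]
  have h2T_le : 2 * T ≤ π / s := by
    have e : π / 2 / s = π / s / 2 := by ring
    rw [e] at hT_le
    linarith
  have h2T_ge : π / s - 2 * (ε / ν) ≤ 2 * T := by
    have harc : (π / 2 - ε / s) / s ≤ (π / 2 - Real.arctan (ε / s)) / s := by gcongr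
    have e2 : (π / 2 - ε / s) / s = π / s / 2 - ε / ν := by
      rw [hνs]
      field_simp
    rw [e2] at harc
    linarith [le_trans harc hT_ge]
  have hεν : ε / ν = ν⁻¹ * ε := by rw [div_eq_mul_inv, mul_comm]
  rw [abs_le]
  constructor
  · show -(ν⁻¹ * ε) ≤ π / s - (ε / ν + 2 * T)
    linarith
  · show π / s - (ε / ν + 2 * T) ≤ ν⁻¹ * ε
    linarith
end

section
/- For every α ∈ (1/2, 3/2), α ≠ 1/2, ν > 0 there exists C > 0 such that for all ε ∈ (0,1]: Σ_{k∈ℤ, k≠0} |k|^{2α}/(1 + νk² + ε²k⁴) ≤ C·ε^{1−2α}. -/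
open Real Finset

lemma head_ineq (β : ℝ) (hβ0 : 0 < β) (hβ1 : β ≤ 1) (a b : ℝ) (ha : 0 ≤ a) (hab : a < b) :
    β * b ^ (β - 1) * (b - a) ≤ b ^ β - a ^ β := by
  have hb : 0 < b := lt_of_le_of_lt ha hab
  obtain ⟨ξ, hξ, hslope⟩ := exists_hasDerivAt_eq_slope (fun x => x ^ β)
    (fun x => β * x ^ (β - 1)) hab
    ((Real.continuous_rpow_const hβ0.le).continuousOn)
    (fun x hx => Real.hasDerivAt_rpow_const (Or.inl (ne_of_gt (lt_of_le_of_lt ha hx.1))))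
  have hξ0 : 0 < ξ := lt_of_le_of_lt ha hξ.1
  have h1 : b ^ (β - 1) ≤ ξ ^ (β - 1) :=
    Real.rpow_le_rpow_of_nonpos hξ0 hξ.2.le (by linarith)
  have h2 : β * b ^ (β - 1) ≤ (b ^ β - a ^ β) / (b - a) := by
    rw [← hslope]
    exact mul_le_mul_of_nonneg_left h1 hβ0.le
  calc β * b ^ (β - 1) * (b - a) ≤ ((b ^ β - a ^ β) / (b - a)) * (b - a) := by
        apply mul_le_mul_of_nonneg_right h2 (by linarith)
    _ = b ^ β - a ^ β := div_mul_cancel₀ _ (by linarith)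

lemma tail_ineq (p : ℝ) (hp : p < 0) (a b : ℝ) (ha : 0 < a) (hab : a < b) :
    (-p) * b ^ (p - 1) * (b - a) ≤ a ^ p - b ^ p := by
  obtain ⟨ξ, hξ, hslope⟩ := exists_hasDerivAt_eq_slope (fun x => x ^ p)
    (fun x => p * x ^ (p - 1)) hab
    (fun x hx => (Real.continuousAt_rpow_const x p
        (Or.inl (ne_of_gt (lt_of_lt_of_le ha hx.1)))).continuousWithinAt)
    (fun x hx => Real.hasDerivAt_rpow_const (Or.inl (ne_of_gt (lt_of_lt_of_le ha hx.1.le))))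
  have hξ0 : 0 < ξ := lt_trans ha hξ.1
  have h1 : b ^ (p - 1) ≤ ξ ^ (p - 1) :=
    Real.rpow_le_rpow_of_nonpos hξ0 hξ.2.le (by linarith)
  have h2 : (b ^ p - a ^ p) / (b - a) ≤ p * b ^ (p - 1) := by
    rw [← hslope]
    exact mul_le_mul_of_nonpos_left h1 hp.le
  have h3 : b ^ p - a ^ p ≤ p * b ^ (p - 1) * (b - a) := by
    rw [div_le_iff₀ (by linarith)] at h2
    linarith
  nlinarith [h3]

lemma head_sum (β : ℝ) (hβ0 : 0 < β) (hβ1 : β ≤ 1) (N : ℕ) :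
    ∑ i ∈ Finset.range N, ((i : ℝ) + 1) ^ (β - 1) ≤ (N : ℝ) ^ β / β := by
  have key : ∀ i ∈ Finset.range N, ((i : ℝ) + 1) ^ (β - 1) ≤
      (((i : ℝ) + 1) ^ β - (i : ℝ) ^ β) / β := by
    intro i _
    rw [le_div_iff₀ hβ0]
    have := head_ineq β hβ0 hβ1 (i : ℝ) ((i : ℝ) + 1) (by positivity) (by linarith)
    nlinarith [this]
  calc ∑ i ∈ Finset.range N, ((i : ℝ) + 1) ^ (β - 1)
      ≤ ∑ i ∈ Finset.range N, ((((i : ℝ) + 1) ^ β - (i : ℝ) ^ β) / β) :=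
        Finset.sum_le_sum key
    _ = (∑ i ∈ Finset.range N, (((i : ℝ) + 1) ^ β - (i : ℝ) ^ β)) / β :=
        (Finset.sum_div _ _ _).symm
    _ = ((N : ℝ) ^ β - (0 : ℝ) ^ β) / β := by
        rw [show (∑ i ∈ Finset.range N, (((i : ℝ) + 1) ^ β - (i : ℝ) ^ β))
          = ∑ i ∈ Finset.range N, ((fun j : ℕ => ((j : ℝ)) ^ β) (i+1) - (fun j : ℕ => ((j : ℝ)) ^ β) i) from
            Finset.sum_congr rfl (fun i _ => by push_cast; rfl),
          Finset.sum_range_sub (fun j : ℕ => ((j : ℝ)) ^ β)]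
        norm_num
    _ = (N : ℝ) ^ β / β := by rw [Real.zero_rpow hβ0.ne', sub_zero]

lemma tail_sum (p : ℝ) (hp : p < 0) (N m : ℕ) (hN : 1 ≤ N) :
    ∑ i ∈ Finset.range m, ((N : ℝ) + 1 + (i : ℝ)) ^ (p - 1) ≤ (N : ℝ) ^ p / (-p) := by
  have hN0 : (1 : ℝ) ≤ (N : ℝ) := by exact_mod_cast hN
  have key : ∀ i ∈ Finset.range m, ((N : ℝ) + 1 + (i : ℝ)) ^ (p - 1) ≤
      (((N : ℝ) + (i : ℝ)) ^ p - ((N : ℝ) + (i : ℝ) + 1) ^ p) / (-p) := by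
    intro i _
    rw [le_div_iff₀ (by linarith)]
    have := tail_ineq p hp ((N : ℝ) + i) ((N : ℝ) + i + 1)
      (by positivity) (by linarith)
    have h1 : (N : ℝ) + 1 + (i : ℝ) = (N : ℝ) + (i : ℝ) + 1 := by ring
    rw [h1]
    nlinarith [this]
  calc ∑ i ∈ Finset.range m, ((N : ℝ) + 1 + (i : ℝ)) ^ (p - 1)
      ≤ ∑ i ∈ Finset.range m, ((((N : ℝ) + (i : ℝ)) ^ p - ((N : ℝ) + (i : ℝ) + 1) ^ p) / (-p)) :=
        Finset.sum_le_sum key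
    _ = (∑ i ∈ Finset.range m, (((N : ℝ) + (i : ℝ)) ^ p - ((N : ℝ) + (i : ℝ) + 1) ^ p)) / (-p) :=
        (Finset.sum_div _ _ _).symm
    _ = (((N : ℝ) + (0:ℕ)) ^ p - ((N : ℝ) + (m : ℝ)) ^ p) / (-p) := by
        rw [show (∑ i ∈ Finset.range m, (((N : ℝ) + (i : ℝ)) ^ p - ((N : ℝ) + (i : ℝ) + 1) ^ p))
          = ∑ i ∈ Finset.range m, ((fun j : ℕ => ((N : ℝ) + (j : ℝ)) ^ p) i - (fun j : ℕ => ((N : ℝ) + (j : ℝ)) ^ p) (i+1)) from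
            Finset.sum_congr rfl (fun i _ => by
              push_cast
              all_goals rw [show (N:ℝ) + (↑i + 1) = (N:ℝ) + ↑i + 1 from by ring]),
          Finset.sum_range_sub' (fun j : ℕ => ((N : ℝ) + (j : ℝ)) ^ p)]
        all_goals norm_num
    _ ≤ (N : ℝ) ^ p / (-p) := by
        apply div_le_div_of_nonneg_right ?_ (by linarith)
        have : (0:ℝ) ≤ ((N : ℝ) + (m : ℝ)) ^ p := Real.rpow_nonneg (by positivity) p
        norm_num
        linarith

theorem stmt_10 (α : ℝ) (hα : α ∈ Set.Ioo (1 / 2 : ℝ) (3 / 2)) (ν : ℝ) (hν : 0 < ν) :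
    ∃ C > 0, ∀ (ε : ℝ), ε ∈ Set.Ioc (0 : ℝ) 1 →
      ∑' k : {k : ℤ // k ≠ 0},
          |((k : ℤ) : ℝ)| ^ (2 * α) / (1 + ν * ((k : ℤ) : ℝ) ^ 2 + ε ^ 2 * ((k : ℤ) : ℝ) ^ 4)
        ≤ C * ε ^ (1 - 2 * α) := by
  obtain ⟨hα1, hα2⟩ := hα
  have hβ0 : 0 < 2 * α - 1 := by linarith
  have h3 : (0:ℝ) < 3 - 2 * α := by linarith
  have hp0 : 2 * α - 3 < 0 := by linarith
  have h2pos : (0:ℝ) < 2 ^ (2 * α - 1) := Real.rpow_pos_of_pos (by norm_num) _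
  have hCpos : 0 < 2 * (2 ^ (2 * α - 1) * (1 / (2 * α - 1) + 1) / ν + 1 / (3 - 2 * α)) :=
    mul_pos two_pos (add_pos (div_pos (mul_pos h2pos
      (add_pos (one_div_pos.mpr hβ0) one_pos)) hν) (one_div_pos.mpr h3))
  refine ⟨_, hCpos, ?_⟩
  rintro ε ⟨hε0, hε1⟩
  have hεα : 0 < ε ^ (1 - 2 * α) := Real.rpow_pos_of_pos hε0 _
  apply tsum_le_of_sum_le' (by positivity)
  intro s
  set g : ℕ → ℝ := fun n => min ((n : ℝ) ^ (2 * α - 2) / ν) ((n : ℝ) ^ (2 * α - 4) / ε ^ 2)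
    with hgdef
  have hgnn : ∀ n, 0 ≤ g n := fun n => le_min (by positivity) (by positivity)
  -- Step 1 : termwise bound
  have step1 : ∀ k : {k : ℤ // k ≠ 0},
      |((k : ℤ) : ℝ)| ^ (2 * α) / (1 + ν * ((k : ℤ) : ℝ) ^ 2 + ε ^ 2 * ((k : ℤ) : ℝ) ^ 4)
        ≤ g ((k : ℤ).natAbs) := by
    rintro ⟨k, hk⟩
    set x : ℝ := |(k : ℝ)| with hxdef
    have hx1 : 1 ≤ x := by
      rw [hxdef, ← Int.cast_abs]
      exact_mod_cast Int.one_le_abs hk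
    have hx0 : 0 < x := lt_of_lt_of_le one_pos hx1
    have hxcast : ((k.natAbs : ℕ) : ℝ) = x := by
      simp [hxdef, Nat.cast_natAbs]
    have hk2 : (k : ℝ) ^ 2 = x ^ 2 := (sq_abs _).symm
    have hk4 : (k : ℝ) ^ 4 = x ^ 4 := by
      rw [hxdef, ← abs_pow, abs_of_nonneg (by positivity)]
    have hnum : 0 ≤ x ^ (2 * α) := Real.rpow_nonneg hx0.le _
    have hD : 1 + ν * (k : ℝ) ^ 2 + ε ^ 2 * (k : ℝ) ^ 4 = 1 + ν * x ^ 2 + ε ^ 2 * x ^ 4 := by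
      rw [hk2, hk4]
    simp only [hgdef, hxcast]
    refine le_min ?_ ?_
    · have hle : x ^ (2 * α) / (1 + ν * x ^ 2 + ε ^ 2 * x ^ 4) ≤ x ^ (2 * α) / (ν * x ^ 2) := by
        apply div_le_div_of_nonneg_left hnum (by positivity)
        nlinarith [sq_nonneg (x^2), sq_nonneg x, sq_nonneg ε]
      rw [hD]
      refine hle.trans (le_of_eq ?_)
      rw [show x ^ (2 * α - 2) = x ^ (2 * α) / x ^ (2 : ℕ) by
        rw [← Real.rpow_natCast x 2, ← Real.rpow_sub hx0]; norm_num]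
      ring
    · have hle : x ^ (2 * α) / (1 + ν * x ^ 2 + ε ^ 2 * x ^ 4) ≤ x ^ (2 * α) / (ε ^ 2 * x ^ 4) := by
        apply div_le_div_of_nonneg_left hnum (by positivity)
        nlinarith [sq_nonneg (x^2), sq_nonneg x, mul_pos hν (by positivity : (0:ℝ) < x^2)]
      rw [hD]
      refine hle.trans (le_of_eq ?_)
      rw [show x ^ (2 * α - 4) = x ^ (2 * α) / x ^ (4 : ℕ) by
        rw [← Real.rpow_natCast x 4, ← Real.rpow_sub hx0]; norm_num]
      ring
  -- Step 2 : reduce to a sum over ℕ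
  set M : ℕ := s.sup (fun k : {k : ℤ // k ≠ 0} => (k.1).natAbs) with hM
  have himg : ∀ t : Finset {k : ℤ // k ≠ 0}, t ⊆ s →
      (t.image (fun k : {k : ℤ // k ≠ 0} => (k.1).natAbs)) ⊆ Finset.Icc 1 M := by
    intro t hts n hn
    rw [Finset.mem_image] at hn
    obtain ⟨k, hkt, rfl⟩ := hn
    rw [Finset.mem_Icc]
    constructor
    · have := k.2; omega
    · exact Finset.le_sup (f := fun k : {k : ℤ // k ≠ 0} => (k.1).natAbs) (hts hkt)
  have step2 : ∑ k ∈ s, |((k : ℤ) : ℝ)| ^ (2 * α) /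
        (1 + ν * ((k : ℤ) : ℝ) ^ 2 + ε ^ 2 * ((k : ℤ) : ℝ) ^ 4)
      ≤ 2 * ∑ n ∈ Finset.Icc 1 M, g n := by
    have h1 : ∑ k ∈ s, |((k : ℤ) : ℝ)| ^ (2 * α) /
          (1 + ν * ((k : ℤ) : ℝ) ^ 2 + ε ^ 2 * ((k : ℤ) : ℝ) ^ 4)
        ≤ ∑ k ∈ s, g ((k : ℤ).natAbs) := Finset.sum_le_sum (fun k _ => step1 k)
    refine h1.trans ?_
    rw [← Finset.sum_filter_add_sum_filter_not s (fun k : {k : ℤ // k ≠ 0} => 0 < k.1)]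
    have key : ∀ t : Finset {k : ℤ // k ≠ 0}, t ⊆ s →
        (∀ a ∈ t, ∀ b ∈ t, (a.1).natAbs = (b.1).natAbs → a = b) →
        ∑ k ∈ t, g ((k : ℤ).natAbs) ≤ ∑ n ∈ Finset.Icc 1 M, g n := by
      intro t hts hinj
      rw [← Finset.sum_image hinj]
      exact Finset.sum_le_sum_of_subset_of_nonneg (himg t hts) (fun n _ _ => hgnn n)
    have hinj1 : ∀ a ∈ s.filter (fun k : {k : ℤ // k ≠ 0} => 0 < k.1),
        ∀ b ∈ s.filter (fun k : {k : ℤ // k ≠ 0} => 0 < k.1),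
        (a.1).natAbs = (b.1).natAbs → a = b := by
      intro a ha b hb hab
      simp only [Finset.mem_filter] at ha hb
      exact Subtype.ext (by omega)
    have hinj2 : ∀ a ∈ s.filter (fun k : {k : ℤ // k ≠ 0} => ¬ 0 < k.1),
        ∀ b ∈ s.filter (fun k : {k : ℤ // k ≠ 0} => ¬ 0 < k.1),
        (a.1).natAbs = (b.1).natAbs → a = b := by
      intro a ha b hb hab
      simp only [Finset.mem_filter, not_lt] at ha hb
      have ha2 := a.2; have hb2 := b.2
      exact Subtype.ext (by omega)
    have e1 := key _ (Finset.filter_subset _ _) hinj1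
    have e2 := key _ (Finset.filter_subset _ _) hinj2
    linarith
  -- Step 3 : the threshold
  set N : ℕ := ⌈1/ε⌉₊ with hNdef
  have hN1 : 1 ≤ N := Nat.ceil_pos.mpr (by positivity)
  have hNge : 1/ε ≤ (N : ℝ) := Nat.le_ceil _
  have hNle : (N : ℝ) ≤ 2/ε := by
    have h1 : ((⌈1/ε⌉₊ : ℕ) : ℝ) < 1/ε + 1 := Nat.ceil_lt_add_one (by positivity)
    have h2 : (1:ℝ) ≤ 1/ε := by rw [le_div_iff₀ hε0]; linarith
    have h4 : (2:ℝ)/ε = 1/ε + 1/ε := by ring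
    rw [hNdef]
    linarith
  have hNpos : (0:ℝ) < (N : ℝ) := by exact_mod_cast hN1
  -- Step 4 : split the sum at N
  have split : ∑ n ∈ Finset.Icc 1 M, g n ≤
      (∑ n ∈ Finset.Icc 1 N, ((n : ℝ)) ^ (2*α - 2)) / ν
      + (∑ n ∈ Finset.Icc (N+1) M, ((n : ℝ)) ^ (2*α - 4)) / ε ^ 2 := by
    rw [← Finset.sum_inter_add_sum_sdiff (Finset.Icc 1 M) (Finset.Icc 1 N) g]
    apply add_le_add
    · calc ∑ n ∈ (Finset.Icc 1 M ∩ Finset.Icc 1 N), g n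
          ≤ ∑ n ∈ (Finset.Icc 1 M ∩ Finset.Icc 1 N), ((n : ℝ)) ^ (2*α - 2) / ν :=
            Finset.sum_le_sum (fun n _ => min_le_left _ _)
        _ ≤ ∑ n ∈ Finset.Icc 1 N, ((n : ℝ)) ^ (2*α - 2) / ν :=
            Finset.sum_le_sum_of_subset_of_nonneg Finset.inter_subset_right
              (fun n _ _ => by positivity)
        _ = (∑ n ∈ Finset.Icc 1 N, ((n : ℝ)) ^ (2*α - 2)) / ν := (Finset.sum_div _ _ _).symm
    · calc ∑ n ∈ (Finset.Icc 1 M \ Finset.Icc 1 N), g n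
          ≤ ∑ n ∈ (Finset.Icc 1 M \ Finset.Icc 1 N), ((n : ℝ)) ^ (2*α - 4) / ε ^ 2 :=
            Finset.sum_le_sum (fun n _ => min_le_right _ _)
        _ ≤ ∑ n ∈ Finset.Icc (N+1) M, ((n : ℝ)) ^ (2*α - 4) / ε ^ 2 := by
            apply Finset.sum_le_sum_of_subset_of_nonneg ?_ (fun n _ _ => by positivity)
            intro n hn
            simp only [Finset.mem_sdiff, Finset.mem_Icc] at hn ⊢
            omega
        _ = (∑ n ∈ Finset.Icc (N+1) M, ((n : ℝ)) ^ (2*α - 4)) / ε ^ 2 :=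
            (Finset.sum_div _ _ _).symm
  -- Step 5 : head estimate
  have head : ∑ n ∈ Finset.Icc 1 N, ((n : ℝ)) ^ (2*α - 2)
      ≤ (1/(2*α - 1) + 1) * (N : ℝ) ^ (2*α - 1) := by
    have hconv : ∑ n ∈ Finset.Icc 1 N, ((n : ℝ)) ^ (2*α - 2)
        = ∑ i ∈ Finset.range N, ((i : ℝ) + 1) ^ (2*α - 2) := by
      rw [show Finset.Icc 1 N = Finset.Ico 1 (N+1) from (Finset.Ico_add_one_right_eq_Icc 1 N).symm,
        Finset.sum_Ico_eq_sum_range]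
      simp only [Nat.add_sub_cancel]
      apply Finset.sum_congr rfl
      intro i _
      push_cast
      rw [add_comm]
    rw [hconv]
    have hrnn : (0:ℝ) ≤ (N : ℝ) ^ (2*α - 1) := Real.rpow_nonneg hNpos.le _
    have hco : (0:ℝ) < 1/(2*α - 1) := one_div_pos.mpr hβ0
    rcases le_or_gt α 1 with hcase | hcase
    · have h := head_sum (2*α - 1) hβ0 (by linarith) N
      rw [show (2*α - 1) - 1 = 2*α - 2 from by ring] at h
      calc ∑ i ∈ Finset.range N, ((i : ℝ) + 1) ^ (2*α - 2)
          ≤ (N : ℝ) ^ (2*α - 1) / (2*α - 1) := h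
        _ = (1/(2*α - 1)) * (N : ℝ) ^ (2*α - 1) := by ring
        _ ≤ (1/(2*α - 1) + 1) * (N : ℝ) ^ (2*α - 1) := by nlinarith
    · have hterm : ∀ i ∈ Finset.range N, ((i : ℝ) + 1) ^ (2*α - 2) ≤ (N : ℝ) ^ (2*α - 2) := by
        intro i hi
        apply Real.rpow_le_rpow (by positivity) ?_ (by linarith)
        rw [Finset.mem_range] at hi
        have : (i + 1 : ℕ) ≤ N := hi
        exact_mod_cast this
      calc ∑ i ∈ Finset.range N, ((i : ℝ) + 1) ^ (2*α - 2)
          ≤ ∑ _i ∈ Finset.range N, (N : ℝ) ^ (2*α - 2) := Finset.sum_le_sum hterm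
        _ = (N : ℝ) * (N : ℝ) ^ (2*α - 2) := by
            rw [Finset.sum_const, Finset.card_range, nsmul_eq_mul]
        _ = (N : ℝ) ^ (2*α - 1) := by
            rw [show (N:ℝ) * (N:ℝ) ^ (2*α - 2) = (N:ℝ) ^ (1:ℝ) * (N:ℝ) ^ (2*α - 2) from by
              rw [Real.rpow_one], ← Real.rpow_add hNpos]
            congr 1; ring
        _ ≤ (1/(2*α - 1) + 1) * (N : ℝ) ^ (2*α - 1) := by nlinarith
  -- Step 6 : tail estimate
  have tail : ∑ n ∈ Finset.Icc (N+1) M, ((n : ℝ)) ^ (2*α - 4)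
      ≤ (N : ℝ) ^ (2*α - 3) / (3 - 2*α) := by
    rw [show Finset.Icc (N+1) M = Finset.Ico (N+1) (M+1) from (Finset.Ico_add_one_right_eq_Icc _ _).symm,
      Finset.sum_Ico_eq_sum_range]
    have h := tail_sum (2*α - 3) hp0 N (M + 1 - (N + 1)) hN1
    rw [show (2*α - 3) - 1 = 2*α - 4 from by ring] at h
    calc ∑ i ∈ Finset.range (M + 1 - (N + 1)), (((N + 1 + i : ℕ)) : ℝ) ^ (2*α - 4)
        = ∑ i ∈ Finset.range (M + 1 - (N + 1)), ((N : ℝ) + 1 + (i : ℝ)) ^ (2*α - 4) := by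
          apply Finset.sum_congr rfl
          intro i _
          congr 1
          push_cast
          ring
      _ ≤ (N : ℝ) ^ (2*α - 3) / (-(2*α - 3)) := h
      _ = (N : ℝ) ^ (2*α - 3) / (3 - 2*α) := by norm_num
  -- Step 7 : ε-arithmetic
  have hNβ : (N : ℝ) ^ (2*α - 1) ≤ 2 ^ (2*α - 1) * ε ^ (1 - 2*α) := by
    calc (N : ℝ) ^ (2*α - 1) ≤ (2/ε) ^ (2*α - 1) :=
        Real.rpow_le_rpow hNpos.le hNle (by linarith)
      _ = 2 ^ (2*α - 1) * ε ^ (1 - 2*α) := by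
        rw [Real.div_rpow (by norm_num) hε0.le, div_eq_mul_inv, ← Real.rpow_neg hε0.le,
          show -(2*α - 1) = 1 - 2*α from by ring]
  have hNtail : (N : ℝ) ^ (2*α - 3) / ε ^ 2 ≤ ε ^ (1 - 2*α) := by
    have h1 : (N : ℝ) ^ (2*α - 3) ≤ (1/ε) ^ (2*α - 3) :=
      Real.rpow_le_rpow_of_nonpos (by positivity) hNge (by linarith)
    have h2 : ((1:ℝ)/ε) ^ (2*α - 3) = ε ^ (3 - 2*α) := by
      rw [one_div, Real.inv_rpow hε0.le, ← Real.rpow_neg hε0.le,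
        show -(2*α - 3) = 3 - 2*α from by ring]
    calc (N : ℝ) ^ (2*α - 3) / ε ^ 2 ≤ ε ^ (3 - 2*α) / ε ^ 2 := by
          rw [← h2]; exact div_le_div_of_nonneg_right h1 (by positivity)
      _ = ε ^ (1 - 2*α) := by
          rw [show (ε:ℝ) ^ 2 = ε ^ ((2:ℕ) : ℝ) from (Real.rpow_natCast ε 2).symm,
            ← Real.rpow_sub hε0]
          congr 1
          push_cast
          ring
  -- assemble everything
  have hcoeff : (0:ℝ) ≤ 1/(2*α - 1) + 1 := by positivity
  calc ∑ k ∈ s, |((k : ℤ) : ℝ)| ^ (2 * α) /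
        (1 + ν * ((k : ℤ) : ℝ) ^ 2 + ε ^ 2 * ((k : ℤ) : ℝ) ^ 4)
      ≤ 2 * ∑ n ∈ Finset.Icc 1 M, g n := step2
    _ ≤ 2 * ((∑ n ∈ Finset.Icc 1 N, ((n : ℝ)) ^ (2*α - 2)) / ν
        + (∑ n ∈ Finset.Icc (N+1) M, ((n : ℝ)) ^ (2*α - 4)) / ε ^ 2) := by linarith
    _ ≤ 2 * (((1/(2*α - 1) + 1) * (N : ℝ) ^ (2*α - 1)) / ν
        + ((N : ℝ) ^ (2*α - 3) / (3 - 2*α)) / ε ^ 2) := by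
        apply mul_le_mul_of_nonneg_left ?_ (by norm_num)
        apply add_le_add
        · exact div_le_div_of_nonneg_right head hν.le
        · exact div_le_div_of_nonneg_right tail (by positivity)
    _ ≤ 2 * (((1/(2*α - 1) + 1) * (2 ^ (2*α - 1) * ε ^ (1 - 2*α))) / ν
        + ε ^ (1 - 2*α) / (3 - 2*α)) := by
        apply mul_le_mul_of_nonneg_left ?_ (by norm_num)
        apply add_le_add
        · exact div_le_div_of_nonneg_right (mul_le_mul_of_nonneg_left hNβ hcoeff) hν.le
        · rw [show (N : ℝ) ^ (2*α - 3) / (3 - 2*α) / ε ^ 2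
              = ((N : ℝ) ^ (2*α - 3) / ε ^ 2) / (3 - 2*α) from by ring]
          exact div_le_div_of_nonneg_right hNtail h3.le
    _ = 2 * (2 ^ (2 * α - 1) * (1 / (2 * α - 1) + 1) / ν + 1 / (3 - 2 * α)) * ε ^ (1 - 2 * α) := by
        ring
end

section
/- Let ν > 0 and S_ε(t) be the Fourier multiplier semigroup with symbol e^{-(νk²+1+ε²k⁴)t} on the periodic Sobolev scale. For every α ≥ β and T > 0 there exists C such that ‖S_ε(t)u‖_{H^α} ≤ C·min(t^{(β−α)/2}, (ε²t)^{(β−α)/4})·‖u‖_{H^β} for all ε ∈ (0,1], t ∈ (0,T], u ∈ H^β. -/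
/-- Sobolev-type weighted square norm of a sequence of Fourier coefficients:
`‖u‖_{H^α}² = ∑ₖ (1+k²)^α |u_k|²`. -/
noncomputable def sobolevSq (α : ℝ) (u : ℤ → ℂ) : ℝ :=
  ∑' k : ℤ, (1 + (k : ℝ) ^ 2) ^ α * ‖u k‖ ^ 2

lemma rpow_mul_exp_le (a s y : ℝ) (ha : 0 ≤ a) (hs : 0 < s) (hy : 0 < y) :
    y ^ a * Real.exp (-(s * y)) ≤ (a / s) ^ a := by
  rcases ha.eq_or_lt with rfl | ha'
  · simp [Real.exp_le_one_iff]
    positivity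
  · have hlog : Real.log (s * y / a) ≤ s * y / a - 1 :=
      Real.log_le_sub_one_of_pos (by positivity)
    have hrw : Real.log (s * y / a) = Real.log s + Real.log y - Real.log a := by
      rw [Real.log_div (by positivity) (by positivity), Real.log_mul hs.ne' hy.ne']
    have hdiv : a * (s * y / a - 1) = s * y - a := by field_simp
    have h3 : a * (Real.log s + Real.log y - Real.log a) ≤ s * y - a := by
      rw [← hrw, ← hdiv]; exact mul_le_mul_of_nonneg_left hlog ha
    have h1 : y ^ a = Real.exp (Real.log y * a) := Real.rpow_def_of_pos hy a
    have h2 : (a / s) ^ a = Real.exp (Real.log (a / s) * a) :=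
      Real.rpow_def_of_pos (by positivity) a
    have h4 : Real.log (a / s) = Real.log a - Real.log s :=
      Real.log_div ha'.ne' hs.ne'
    rw [h1, h2, ← Real.exp_add, Real.exp_le_exp, h4]
    nlinarith [h3]

set_option maxHeartbeats 1000000 in
theorem stmt_15 (ν : ℝ) (hν : 0 < ν) (α β : ℝ) (hαβ : β ≤ α) (T : ℝ) (hT : 0 < T) :
    ∃ C > 0, ∀ ε ∈ Set.Ioc (0 : ℝ) 1, ∀ t ∈ Set.Ioc (0 : ℝ) T, ∀ u : ℤ → ℂ,
      Summable (fun k : ℤ => (1 + (k : ℝ) ^ 2) ^ β * ‖u k‖ ^ 2) →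
      sobolevSq α (fun k =>
          Real.exp (-(ν * (k : ℝ) ^ 2 + 1 + ε ^ 2 * (k : ℝ) ^ 4) * t) • u k)
        ≤ (C * min (t ^ ((β - α) / 2)) ((ε ^ 2 * t) ^ ((β - α) / 4))) ^ 2
            * sobolevSq β u := by
  have hγ : 0 ≤ α - β := by linarith
  set γ := α - β with hγdef
  have hm : 0 < min ν 1 := lt_min hν one_pos
  set m := min ν 1 with hmdef
  set C1 : ℝ := (γ / (2 * m)) ^ γ with hC1def
  set C2 : ℝ := 2 ^ γ * (γ / 4) ^ (γ / 2) + T ^ (γ / 2) with hC2def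
  have hC1 : 0 ≤ C1 := Real.rpow_nonneg (by positivity) _
  have hC2 : 0 ≤ C2 := by positivity
  set D : ℝ := C1 + C2 + 1 with hDdef
  have hDpos : 0 < D := by positivity
  refine ⟨Real.sqrt D, Real.sqrt_pos.mpr hDpos, ?_⟩
  rintro ε ⟨hε0, hε1⟩ t ⟨ht0, htT⟩ u hu
  set M : ℝ := min (t ^ ((β - α) / 2)) ((ε ^ 2 * t) ^ ((β - α) / 4)) with hMdef
  have hεt : 0 < ε ^ 2 * t := by positivity
  -- squares of the two minimands
  have hsq1 : (t ^ ((β - α) / 2)) ^ 2 = t ^ (-γ) := by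
    rw [sq, ← Real.rpow_add ht0]; congr 1; rw [hγdef]; ring
  have hsq2 : ((ε ^ 2 * t) ^ ((β - α) / 4)) ^ 2 = (ε ^ 2 * t) ^ (-γ / 2) := by
    rw [sq, ← Real.rpow_add hεt]; congr 1; rw [hγdef]; ring
  -- the key pointwise bound
  have hterm : ∀ k : ℤ, (1 + (k : ℝ) ^ 2) ^ γ *
      Real.exp (-(2 * (ν * (k : ℝ) ^ 2 + 1 + ε ^ 2 * (k : ℝ) ^ 4) * t)) ≤ D * M ^ 2 := by
    intro k
    have hk2 : (0 : ℝ) ≤ (k : ℝ) ^ 2 := sq_nonneg _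
    have hy : (0 : ℝ) < 1 + (k : ℝ) ^ 2 := by positivity
    have hmν : m ≤ ν := min_le_left _ _
    have hm1 : m ≤ 1 := min_le_right _ _
    -- heat bound
    have B1 : (1 + (k : ℝ) ^ 2) ^ γ *
        Real.exp (-(2 * (ν * (k : ℝ) ^ 2 + 1 + ε ^ 2 * (k : ℝ) ^ 4) * t)) ≤ C1 * t ^ (-γ) := by
      have hs : (0 : ℝ) < 2 * m * t := by positivity
      have hmon : (2 * m * t) * (1 + (k : ℝ) ^ 2) ≤
          2 * (ν * (k : ℝ) ^ 2 + 1 + ε ^ 2 * (k : ℝ) ^ 4) * t := by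
        have h4 : (0 : ℝ) ≤ ε ^ 2 * (k : ℝ) ^ 4 := by positivity
        nlinarith [mul_le_mul_of_nonneg_left hmν hk2]
      have := rpow_mul_exp_le γ (2 * m * t) (1 + (k : ℝ) ^ 2) hγ hs hy
      have hexp : Real.exp (-(2 * (ν * (k : ℝ) ^ 2 + 1 + ε ^ 2 * (k : ℝ) ^ 4) * t)) ≤
          Real.exp (-((2 * m * t) * (1 + (k : ℝ) ^ 2))) :=
        Real.exp_le_exp.mpr (by linarith)
      have hC : (γ / (2 * m * t)) ^ γ = C1 * t ^ (-γ) := by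
        have : γ / (2 * m * t) = (γ / (2 * m)) * t⁻¹ := by
          field_simp
        rw [this, Real.mul_rpow (by positivity) (by positivity),
          Real.inv_rpow ht0.le, ← Real.rpow_neg ht0.le]
      calc (1 + (k : ℝ) ^ 2) ^ γ *
            Real.exp (-(2 * (ν * (k : ℝ) ^ 2 + 1 + ε ^ 2 * (k : ℝ) ^ 4) * t))
          ≤ (1 + (k : ℝ) ^ 2) ^ γ * Real.exp (-((2 * m * t) * (1 + (k : ℝ) ^ 2))) :=
            mul_le_mul_of_nonneg_left hexp (by positivity)
        _ ≤ (γ / (2 * m * t)) ^ γ := this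
        _ = C1 * t ^ (-γ) := hC
    -- biharmonic bound
    have B2 : (1 + (k : ℝ) ^ 2) ^ γ *
        Real.exp (-(2 * (ν * (k : ℝ) ^ 2 + 1 + ε ^ 2 * (k : ℝ) ^ 4) * t)) ≤
        C2 * (ε ^ 2 * t) ^ (-γ / 2) := by
      rcases eq_or_ne k 0 with rfl | hk
      · have hle : (ε ^ 2 * t) ^ (γ / 2) ≤ T ^ (γ / 2) := by
          apply Real.rpow_le_rpow hεt.le _ (by positivity)
          have hε2 : ε ^ 2 ≤ 1 := by nlinarith
          nlinarith [mul_le_mul_of_nonneg_right hε2 ht0.le]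
        have hinv : (0:ℝ) < (ε ^ 2 * t) ^ (-γ / 2) := Real.rpow_pos_of_pos hεt _
        have hid : ((ε ^ 2 * t) ^ (γ / 2)) * ((ε ^ 2 * t) ^ (-γ / 2)) = 1 := by
          rw [← Real.rpow_add hεt]
          have : γ / 2 + -γ / 2 = 0 := by ring
          rw [this, Real.rpow_zero]
        have h1 : (1:ℝ) ≤ T ^ (γ / 2) * (ε ^ 2 * t) ^ (-γ / 2) := by
          calc (1:ℝ) = ((ε ^ 2 * t) ^ (γ / 2)) * ((ε ^ 2 * t) ^ (-γ / 2)) := hid.symm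
            _ ≤ T ^ (γ / 2) * (ε ^ 2 * t) ^ (-γ / 2) :=
              mul_le_mul_of_nonneg_right hle hinv.le
        have hC2ge : T ^ (γ / 2) ≤ C2 := by
          have : (0:ℝ) ≤ 2 ^ γ * (γ / 4) ^ (γ / 2) := by positivity
          linarith
        have hexp1 : Real.exp (-(2 * (ν * ((0:ℤ) : ℝ) ^ 2 + 1 + ε ^ 2 * ((0:ℤ) : ℝ) ^ 4) * t)) ≤ 1 := by
          apply Real.exp_le_one_iff.mpr; push_cast; nlinarith
        calc (1 + ((0:ℤ) : ℝ) ^ 2) ^ γ *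
              Real.exp (-(2 * (ν * ((0:ℤ) : ℝ) ^ 2 + 1 + ε ^ 2 * ((0:ℤ) : ℝ) ^ 4) * t))
            ≤ 1 := by push_cast; simpa using hexp1
          _ ≤ T ^ (γ / 2) * (ε ^ 2 * t) ^ (-γ / 2) := h1
          _ ≤ C2 * (ε ^ 2 * t) ^ (-γ / 2) :=
            mul_le_mul_of_nonneg_right hC2ge hinv.le
      · rw [neg_div]
        have hz : (1 : ℤ) ≤ k ^ 2 := by nlinarith [Int.one_le_abs hk, sq_abs k]
        have hk1 : (1 : ℝ) ≤ (k : ℝ) ^ 2 := by exact_mod_cast hz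
        have hk4 : (0 : ℝ) < (k : ℝ) ^ 4 := by
          have : (0:ℝ) < (k:ℝ)^2 := by linarith
          nlinarith
        have hs : (0 : ℝ) < 2 * ε ^ 2 * t := by positivity
        -- (1+k²)^γ ≤ 2^γ * (k⁴)^(γ/2)
        have hA : (1 + (k : ℝ) ^ 2) ^ γ ≤ 2 ^ γ * ((k : ℝ) ^ 4) ^ (γ / 2) := by
          have h1 : (1 + (k : ℝ) ^ 2) ^ γ ≤ (2 * (k : ℝ) ^ 2) ^ γ :=
            Real.rpow_le_rpow hy.le (by nlinarith) hγ
          have h2 : (2 * (k : ℝ) ^ 2) ^ γ = 2 ^ γ * ((k : ℝ) ^ 2) ^ γ :=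
            Real.mul_rpow (by norm_num) hk2
          have h3 : ((k : ℝ) ^ 4) ^ (γ / 2) = ((k : ℝ) ^ 2) ^ γ := by
            have h4 : ((k : ℝ) ^ 4) = ((k : ℝ) ^ 2) ^ (2 : ℕ) := by ring
            rw [h4, ← Real.rpow_natCast ((k : ℝ) ^ 2) 2, ← Real.rpow_mul hk2]
            congr 1
            push_cast
            ring
          rw [h3]; linarith [h1, h2.le]
        have hexp2 : Real.exp (-(2 * (ν * (k : ℝ) ^ 2 + 1 + ε ^ 2 * (k : ℝ) ^ 4) * t)) ≤
            Real.exp (-((2 * ε ^ 2 * t) * (k : ℝ) ^ 4)) := by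
          apply Real.exp_le_exp.mpr
          have : (0:ℝ) ≤ (ν * (k : ℝ) ^ 2 + 1) * t := by positivity
          nlinarith
        have hkey := rpow_mul_exp_le (γ / 2) (2 * ε ^ 2 * t) ((k : ℝ) ^ 4)
          (by positivity) hs hk4
        have hC : (γ / 2 / (2 * ε ^ 2 * t)) ^ (γ / 2) =
            (γ / 4) ^ (γ / 2) * (ε ^ 2 * t) ^ (-(γ / 2)) := by
          have h5 : γ / 2 / (2 * ε ^ 2 * t) = (γ / 4) * (ε ^ 2 * t)⁻¹ := by
            rw [mul_assoc, div_div, div_eq_mul_inv γ, div_eq_mul_inv γ, mul_inv]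
            ring_nf
          rw [h5, Real.mul_rpow (by positivity) (by positivity),
            Real.inv_rpow hεt.le, ← Real.rpow_neg hεt.le]
        have hC2ge : 2 ^ γ * (γ / 4) ^ (γ / 2) ≤ C2 := by
          have : (0:ℝ) ≤ T ^ (γ / 2) := by positivity
          linarith
        have hstep : (1 + (k : ℝ) ^ 2) ^ γ *
            Real.exp (-(2 * (ν * (k : ℝ) ^ 2 + 1 + ε ^ 2 * (k : ℝ) ^ 4) * t)) ≤
            2 ^ γ * (((k : ℝ) ^ 4) ^ (γ / 2) *
              Real.exp (-((2 * ε ^ 2 * t) * (k : ℝ) ^ 4))) := by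
          have e1 : (0:ℝ) ≤ Real.exp (-(2 * (ν * (k : ℝ) ^ 2 + 1 + ε ^ 2 * (k : ℝ) ^ 4) * t)) :=
            (Real.exp_pos _).le
          calc (1 + (k : ℝ) ^ 2) ^ γ *
                Real.exp (-(2 * (ν * (k : ℝ) ^ 2 + 1 + ε ^ 2 * (k : ℝ) ^ 4) * t))
              ≤ (2 ^ γ * ((k : ℝ) ^ 4) ^ (γ / 2)) *
                Real.exp (-(2 * (ν * (k : ℝ) ^ 2 + 1 + ε ^ 2 * (k : ℝ) ^ 4) * t)) :=
                mul_le_mul_of_nonneg_right hA e1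
            _ ≤ (2 ^ γ * ((k : ℝ) ^ 4) ^ (γ / 2)) *
                Real.exp (-((2 * ε ^ 2 * t) * (k : ℝ) ^ 4)) :=
                mul_le_mul_of_nonneg_left hexp2 (by positivity)
            _ = 2 ^ γ * (((k : ℝ) ^ 4) ^ (γ / 2) *
                Real.exp (-((2 * ε ^ 2 * t) * (k : ℝ) ^ 4))) := by ring
        calc (1 + (k : ℝ) ^ 2) ^ γ *
              Real.exp (-(2 * (ν * (k : ℝ) ^ 2 + 1 + ε ^ 2 * (k : ℝ) ^ 4) * t))
            ≤ 2 ^ γ * ((γ / 2 / (2 * ε ^ 2 * t)) ^ (γ / 2)) := by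
              refine hstep.trans (mul_le_mul_of_nonneg_left hkey (by positivity))
          _ = (2 ^ γ * (γ / 4) ^ (γ / 2)) * (ε ^ 2 * t) ^ (-(γ / 2)) := by rw [hC]; ring
          _ ≤ C2 * (ε ^ 2 * t) ^ (-(γ / 2)) :=
              mul_le_mul_of_nonneg_right hC2ge (Real.rpow_pos_of_pos hεt _).le
    -- combine via min
    have hC1D : C1 ≤ D := by linarith
    have hC2D : C2 ≤ D := by linarith
    rcases le_total (t ^ ((β - α) / 2)) ((ε ^ 2 * t) ^ ((β - α) / 4)) with hmin | hmin
    · have hM : M = t ^ ((β - α) / 2) := min_eq_left hmin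
      rw [hM, hsq1]
      calc _ ≤ C1 * t ^ (-γ) := B1
        _ ≤ D * t ^ (-γ) :=
          mul_le_mul_of_nonneg_right hC1D (Real.rpow_pos_of_pos ht0 _).le
    · have hM : M = (ε ^ 2 * t) ^ ((β - α) / 4) := min_eq_right hmin
      rw [hM, hsq2]
      calc _ ≤ C2 * (ε ^ 2 * t) ^ (-γ / 2) := B2
        _ ≤ D * (ε ^ 2 * t) ^ (-γ / 2) :=
          mul_le_mul_of_nonneg_right hC2D (Real.rpow_pos_of_pos hεt _).le
  -- now sum up
  have hCsq : (Real.sqrt D * M) ^ 2 = D * M ^ 2 := by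
    rw [mul_pow, Real.sq_sqrt hDpos.le]
  have hK : 0 ≤ D * M ^ 2 := by positivity
  have hptwise : ∀ k : ℤ, (1 + (k : ℝ) ^ 2) ^ α *
      ‖Real.exp (-(ν * (k : ℝ) ^ 2 + 1 + ε ^ 2 * (k : ℝ) ^ 4) * t) • u k‖ ^ 2 ≤
      (D * M ^ 2) * ((1 + (k : ℝ) ^ 2) ^ β * ‖u k‖ ^ 2) := by
    intro k
    have hy : (0 : ℝ) < 1 + (k : ℝ) ^ 2 := by positivity
    have hnorm : ‖Real.exp (-(ν * (k : ℝ) ^ 2 + 1 + ε ^ 2 * (k : ℝ) ^ 4) * t) • u k‖ ^ 2 =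
        Real.exp (-(2 * (ν * (k : ℝ) ^ 2 + 1 + ε ^ 2 * (k : ℝ) ^ 4) * t)) * ‖u k‖ ^ 2 := by
      rw [norm_smul, Real.norm_eq_abs, abs_of_pos (Real.exp_pos _), mul_pow, sq (Real.exp _),
        ← Real.exp_add]
      congr 2
      ring
    have hsplit : (1 + (k : ℝ) ^ 2) ^ α = (1 + (k : ℝ) ^ 2) ^ β * (1 + (k : ℝ) ^ 2) ^ γ := by
      rw [← Real.rpow_add hy]; congr 1; rw [hγdef]; ring
    rw [hnorm, hsplit]
    have := hterm k
    have hnn : (0:ℝ) ≤ (1 + (k : ℝ) ^ 2) ^ β * ‖u k‖ ^ 2 := by positivity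
    calc (1 + (k : ℝ) ^ 2) ^ β * (1 + (k : ℝ) ^ 2) ^ γ *
          (Real.exp (-(2 * (ν * (k : ℝ) ^ 2 + 1 + ε ^ 2 * (k : ℝ) ^ 4) * t)) * ‖u k‖ ^ 2)
        = ((1 + (k : ℝ) ^ 2) ^ γ *
            Real.exp (-(2 * (ν * (k : ℝ) ^ 2 + 1 + ε ^ 2 * (k : ℝ) ^ 4) * t))) *
          ((1 + (k : ℝ) ^ 2) ^ β * ‖u k‖ ^ 2) := by ring
      _ ≤ (D * M ^ 2) * ((1 + (k : ℝ) ^ 2) ^ β * ‖u k‖ ^ 2) :=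
          mul_le_mul_of_nonneg_right (hterm k) hnn
  have hsumR : Summable (fun k : ℤ => (D * M ^ 2) * ((1 + (k : ℝ) ^ 2) ^ β * ‖u k‖ ^ 2)) :=
    hu.mul_left _
  have hsumL : Summable (fun k : ℤ => (1 + (k : ℝ) ^ 2) ^ α *
      ‖Real.exp (-(ν * (k : ℝ) ^ 2 + 1 + ε ^ 2 * (k : ℝ) ^ 4) * t) • u k‖ ^ 2) := by
    apply Summable.of_nonneg_of_le (fun k => by positivity) hptwise hsumR
  calc sobolevSq α (fun k =>
          Real.exp (-(ν * (k : ℝ) ^ 2 + 1 + ε ^ 2 * (k : ℝ) ^ 4) * t) • u k)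
      ≤ ∑' k : ℤ, (D * M ^ 2) * ((1 + (k : ℝ) ^ 2) ^ β * ‖u k‖ ^ 2) :=
        Summable.tsum_le_tsum hptwise hsumL hsumR
    _ = (D * M ^ 2) * sobolevSq β u := tsum_mul_left
    _ = (Real.sqrt D * M) ^ 2 * sobolevSq β u := by rw [hCsq]
end
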